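/- The group G = ⟨x₁, y₁, x₂, y₂ | x₁² = y₁³, x₂² = y₂³, x₁² = x₂ y₂⁻¹, x₂² = x₁ y₁⁻¹⟩ is not left-orderable. -/

import Mathlib

/-- A group is left-orderable if it admits a strict total order invariant under
left multiplication. -/
def IsLeftOrderable (G : Type*) [Group G] : Prop :=
  ∃ r : G → G → Prop, IsStrictTotalOrder G r ∧ ∀ f g h : G, r g h → r (f * g) (f * h)

/-- Relators for `⟨x₁, y₁, x₂, y₂ | x₁² = y₁³, x₂² = y₂³, x₁² = x₂y₂⁻¹,
x₂² = x₁y₁⁻¹⟩`, with `x₁ = of 0`, `y₁ = of 1`, `x₂ = of 2`, `y₂ = of 3`. -/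
def trefoilDoubleRels : Set (FreeGroup (Fin 4)) :=
  { FreeGroup.of 0 ^ 2 * (FreeGroup.of 1 ^ 3)⁻¹,
    FreeGroup.of 2 ^ 2 * (FreeGroup.of 3 ^ 3)⁻¹,
    FreeGroup.of 0 ^ 2 * (FreeGroup.of 2 * (FreeGroup.of 3)⁻¹)⁻¹,
    FreeGroup.of 2 ^ 2 * (FreeGroup.of 0 * (FreeGroup.of 1)⁻¹)⁻¹ }

section Aux

variable {G : Type*} [Group G]

/-- Case where both `a` and `b` are positive. -/
private lemma trefoil_pospos (lt : G → G → Prop)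
    (htr : ∀ {x y z : G}, lt x y → lt y z → lt x z)
    (hirr : ∀ x : G, ¬ lt x x)
    (hmul : ∀ f g h : G, lt g h → lt (f * g) (f * h))
    (a b : G)
    (hR1 : a * a * a * b * (a * a * a) = b * b)
    (hR2 : b * b * b * a * (b * b * b) = a * a)
    (ha : lt 1 a) (hb : lt 1 b) : False := by
  have key : ∀ u v : G, u * u * u * v * (u * u * u) = v * v →
      lt 1 u → lt 1 v → lt (u * u * u) (v * v) := by
    intro u v hR hu hv
    have h2 : lt u (u * u) := by
      have h := hmul u 1 u hu; rwa [mul_one] at h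
    have h2' : lt 1 (u * u) := htr hu h2
    have h3 : lt (u * u) (u * u * u) := by
      have h := hmul (u * u) 1 u hu; rwa [mul_one] at h
    have h3' : lt 1 (u * u * u) := htr h2' h3
    have s1 : lt (u * u * u * v) (v * v) := by
      have h := hmul (u * u * u * v) 1 (u * u * u) h3'
      rwa [mul_one, hR] at h
    have s2 : lt (u * u * u) (u * u * u * v) := by
      have h := hmul (u * u * u) 1 v hv; rwa [mul_one] at h
    exact htr s2 s1
  have k1 : lt (a * a * a) (b * b) := key a b hR1 ha hb
  have k2 : lt (b * b * b) (a * a) := key b a hR2 hb ha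
  have hb3 : lt (b * b) (b * b * b) := by
    have h := hmul (b * b) 1 b hb; rwa [mul_one] at h
  have ha3 : lt (a * a) (a * a * a) := by
    have h := hmul (a * a) 1 a ha; rwa [mul_one] at h
  exact hirr (b * b) (htr (htr (htr hb3 k2) ha3) k1)

/-- Case where `a` is positive and `b` is negative. -/
private lemma trefoil_posneg (lt : G → G → Prop)
    (htr : ∀ {x y z : G}, lt x y → lt y z → lt x z)
    (hirr : ∀ x : G, ¬ lt x x)
    (htri : ∀ x y : G, lt x y ∨ x = y ∨ lt y x)
    (hmul : ∀ f g h : G, lt g h → lt (f * g) (f * h))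
    (a b : G)
    (hR1 : a * a * a * b * (a * a * a) = b * b)
    (hR2 : b * b * b * a * (b * b * b) = a * a)
    (hcomm : a * a * a * (b * b * b) = b * b * b * (a * a * a))
    (ha : lt 1 a) (hb : lt b 1) : False := by
  have b2 : lt (b * b) b := by
    have h := hmul b b 1 hb; rwa [mul_one] at h
  have b2' : lt (b * b) 1 := htr b2 hb
  have b3 : lt (b * (b * b)) (b * b) := hmul b (b * b) b b2
  have b3' : lt (b * (b * b)) 1 := htr b3 b2'
  have a2 : lt a (a * a) := by
    have h := hmul a 1 a ha; rwa [mul_one] at h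
  have a2' : lt 1 (a * a) := htr ha a2
  have a3 : lt (a * a) (a * (a * a)) := hmul a a (a * a) a2
  have a3' : lt 1 (a * (a * a)) := htr a2' a3
  -- q = b * a³ satisfies q² = b³
  have hq : (b * (a * (a * a))) * (b * (a * (a * a))) = b * (b * b) := by
    have e : (b * (a * (a * a))) * (b * (a * (a * a)))
        = b * (a * a * a * b * (a * a * a)) := by group
    rw [e, hR1]
  have hq1 : lt (b * (a * (a * a))) 1 := by
    rcases htri (b * (a * (a * a))) 1 with h | h | h
    · exact h
    · exfalso
      have e : b * (b * b) = 1 := by rw [← hq, h, one_mul]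
      exact hirr 1 (e ▸ b3')
    · exfalso
      have h2 := hmul (b * (a * (a * a))) 1 (b * (a * (a * a))) h
      rw [mul_one, hq] at h2
      exact hirr 1 (htr (htr h h2) b3')
  -- p = a * b³ satisfies p² = a³
  have hp : (a * (b * (b * b))) * (a * (b * (b * b))) = a * (a * a) := by
    have e : (a * (b * (b * b))) * (a * (b * (b * b)))
        = a * (b * b * b * a * (b * b * b)) := by group
    rw [e, hR2]
  have hp1 : lt 1 (a * (b * (b * b))) := by
    rcases htri 1 (a * (b * (b * b))) with h | h | h
    · exact h
    · exfalso
      have e : a * (a * a) = 1 := by rw [← hp, ← h, one_mul]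
      exact hirr 1 (e ▸ a3')
    · exfalso
      have h2 := hmul (a * (b * (b * b))) (a * (b * (b * b))) 1 h
      rw [mul_one, hp] at h2
      exact hirr 1 (htr a3' (htr h2 h))
  -- a⁻¹ < b³
  have s4 : lt a⁻¹ (b * (b * b)) := by
    have h := hmul a⁻¹ 1 (a * (b * (b * b))) hp1
    rwa [mul_one, inv_mul_cancel_left] at h
  -- a² < a³ b³
  have s5 := hmul (a * (a * a)) a⁻¹ (b * (b * b)) s4
  have e1 : a * (a * a) * a⁻¹ = a * a := by group
  have e2 : a * (a * a) * (b * (b * b)) = b * b * (b * (a * (a * a))) := by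
    calc a * (a * a) * (b * (b * b)) = a * a * a * (b * b * b) := by group
      _ = b * b * b * (a * a * a) := hcomm
      _ = b * b * (b * (a * (a * a))) := by group
  rw [e1, e2] at s5
  have s6 : lt (b * b * (b * (a * (a * a)))) (b * b) := by
    have h := hmul (b * b) (b * (a * (a * a))) 1 hq1
    rwa [mul_one] at h
  exact hirr 1 (htr a2' (htr s5 (htr s6 b2')))

/-- The order-theoretic contradiction from the derived relations. -/
private lemma trefoil_key (lt : G → G → Prop)
    (htr : ∀ {x y z : G}, lt x y → lt y z → lt x z)
    (hirr : ∀ x : G, ¬ lt x x)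
    (htri : ∀ x y : G, lt x y ∨ x = y ∨ lt y x)
    (hmul : ∀ f g h : G, lt g h → lt (f * g) (f * h))
    (a b : G) (hane : a ≠ 1) (hbne : b ≠ 1)
    (hR1 : a * a * a * b * (a * a * a) = b * b)
    (hR2 : b * b * b * a * (b * b * b) = a * a)
    (hcomm : a * a * a * (b * b * b) = b * b * b * (a * a * a)) : False := by
  rcases htri a 1 with haneg | haeq | hapos
  · rcases htri b 1 with hbneg | hbeq | hbpos
    · -- both negative: use the flipped order
      exact trefoil_pospos (fun x y => lt y x) (fun h1 h2 => htr h2 h1) hirr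
        (fun f g h hgh => hmul f h g hgh) a b hR1 hR2 haneg hbneg
    · -- b = 1 : then R2 gives a = a * a, so a = 1
      apply hane
      rw [hbeq] at hR2
      simp only [one_mul, mul_one] at hR2
      exact (mul_eq_right.mp hR2.symm)
    · exact trefoil_posneg lt @htr hirr htri hmul b a hR2 hR1 hcomm.symm hbpos haneg
  · -- a = 1 : then R1 gives b = b * b, so b = 1
    apply hbne
    rw [haeq] at hR1
    simp only [one_mul, mul_one] at hR1
    exact (mul_eq_right.mp hR1.symm)
  · rcases htri b 1 with hbneg | hbeq | hbpos
    · exact trefoil_posneg lt @htr hirr htri hmul a b hR1 hR2 hcomm hapos hbneg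
    · apply hane
      rw [hbeq] at hR2
      simp only [one_mul, mul_one] at hR2
      exact (mul_eq_right.mp hR2.symm)
    · exact trefoil_pospos lt @htr hirr hmul a b hR1 hR2 hapos hbpos

end Aux

/-- The map to `ℤ/35` (written multiplicatively) sending `x₁ ↦ 1, y₁ ↦ 24, x₂ ↦ 6, y₂ ↦ 4`. -/
private def trefoilPhiFun : Fin 4 → Multiplicative (ZMod 35) :=
  ![Multiplicative.ofAdd 1, Multiplicative.ofAdd 24,
    Multiplicative.ofAdd 6, Multiplicative.ofAdd 4]

private lemma trefoilPhi_rels :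
    ∀ r ∈ trefoilDoubleRels, FreeGroup.lift trefoilPhiFun r = 1 := by
  intro r hr
  simp only [trefoilDoubleRels, Set.mem_insert_iff, Set.mem_singleton_iff] at hr
  rcases hr with rfl | rfl | rfl | rfl <;>
    · simp only [map_mul, map_pow, map_inv, FreeGroup.lift_apply_of]
      decide

/-- (Boileau–Short–Wiest) The group
`⟨x₁, y₁, x₂, y₂ | x₁² = y₁³, x₂² = y₂³, x₁² = x₂y₂⁻¹, x₂² = x₁y₁⁻¹⟩`
is not left-orderable. -/
theorem trefoilDoubleGroup_not_leftOrderable :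
    ¬ IsLeftOrderable (PresentedGroup trefoilDoubleRels) := by
  rintro ⟨lt, hsto, hmul⟩
  haveI := hsto
  have htr : ∀ {x y z : PresentedGroup trefoilDoubleRels}, lt x y → lt y z → lt x z :=
    fun h1 h2 => trans_of lt h1 h2
  have hirr : ∀ x : PresentedGroup trefoilDoubleRels, ¬ lt x x := fun x => irrefl_of lt x
  have htri : ∀ x y : PresentedGroup trefoilDoubleRels, lt x y ∨ x = y ∨ lt y x :=
    fun x y => trichotomous_of lt x y
  -- the generators
  set x1 : PresentedGroup trefoilDoubleRels := PresentedGroup.of 0 with hx1d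
  set y1 : PresentedGroup trefoilDoubleRels := PresentedGroup.of 1 with hy1d
  set x2 : PresentedGroup trefoilDoubleRels := PresentedGroup.of 2 with hx2d
  set y2 : PresentedGroup trefoilDoubleRels := PresentedGroup.of 3 with hy2d
  -- the relations hold in the presented group
  have hrel : ∀ w ∈ trefoilDoubleRels, PresentedGroup.mk trefoilDoubleRels w = 1 := by
    intro w hw
    exact (QuotientGroup.eq_one_iff w).mpr (Subgroup.subset_normalClosure hw)
  have h1 : x1 ^ 2 = y1 ^ 3 := by
    have h := hrel _ (Or.inl rfl)
    simp only [map_mul, map_pow, map_inv] at h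
    rw [mul_inv_eq_one] at h
    exact h
  have h2 : x2 ^ 2 = y2 ^ 3 := by
    have h := hrel _ (Or.inr (Or.inl rfl))
    simp only [map_mul, map_pow, map_inv] at h
    rw [mul_inv_eq_one] at h
    exact h
  have h3 : x1 ^ 2 = x2 * y2⁻¹ := by
    have h := hrel _ (Or.inr (Or.inr (Or.inl rfl)))
    simp only [map_mul, map_pow, map_inv] at h
    rw [mul_inv_eq_one] at h
    exact h
  have h4 : x2 ^ 2 = x1 * y1⁻¹ := by
    have h := hrel _ (Or.inr (Or.inr (Or.inr rfl)))
    simp only [map_mul, map_pow, map_inv] at h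
    rw [mul_inv_eq_one] at h
    exact h
  -- the generators are nontrivial, via the map to ℤ/35
  have hy1ne : y1 ≠ 1 := by
    intro h
    have := congrArg (PresentedGroup.toGroup trefoilPhi_rels) h
    rw [hy1d, PresentedGroup.toGroup.of, map_one] at this
    exact absurd this (by decide)
  have hy2ne : y2 ≠ 1 := by
    intro h
    have := congrArg (PresentedGroup.toGroup trefoilPhi_rels) h
    rw [hy2d, PresentedGroup.toGroup.of, map_one] at this
    exact absurd this (by decide)
  -- derive the two-generator relations for a = y1, b = y2
  have hx2 : x2 = x1 ^ 2 * y2 := by rw [h3]; group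
  have hx1 : x1 = x2 ^ 2 * y1 := by rw [h4]; group
  have hR1 : y1 * y1 * y1 * y2 * (y1 * y1 * y1) = y2 * y2 := by
    have hgg : (x1 ^ 2 * y2) ^ 2 = y2 ^ 3 := by rw [← hx2]; exact h2
    rw [h1] at hgg
    apply mul_right_cancel (b := y2)
    calc y1 * y1 * y1 * y2 * (y1 * y1 * y1) * y2 = (y1 ^ 3 * y2) ^ 2 := by simp [pow_succ, pow_two, mul_assoc]
      _ = y2 ^ 3 := hgg
      _ = y2 * y2 * y2 := by simp [pow_succ, mul_assoc]
  have hR2 : y2 * y2 * y2 * y1 * (y2 * y2 * y2) = y1 * y1 := by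
    have hgg : (x2 ^ 2 * y1) ^ 2 = y1 ^ 3 := by rw [← hx1]; exact h1
    rw [h2] at hgg
    apply mul_right_cancel (b := y1)
    calc y2 * y2 * y2 * y1 * (y2 * y2 * y2) * y1 = (y2 ^ 3 * y1) ^ 2 := by simp [pow_succ, pow_two, mul_assoc]
      _ = y1 ^ 3 := hgg
      _ = y1 * y1 * y1 := by simp [pow_succ, mul_assoc]
  have hcomm : y1 * y1 * y1 * (y2 * y2 * y2) = y2 * y2 * y2 * (y1 * y1 * y1) := by
    have ha3 : y1 * y1 * y1 = x2 * y2⁻¹ := by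
      have e : y1 ^ 3 = x2 * y2⁻¹ := by rw [← h1, h3]
      rw [show y1 * y1 * y1 = y1 ^ 3 by simp [pow_succ, mul_assoc], e]
    have hb3 : y2 * y2 * y2 = x2 ^ 2 := by
      rw [show y2 * y2 * y2 = y2 ^ 3 by simp [pow_succ, mul_assoc], ← h2]
    have hc : Commute (x2 ^ 2) y2⁻¹ := by
      have : Commute (x2 ^ 2) y2 := by rw [h2]; exact (Commute.refl y2).pow_left 3
      exact this.inv_right
    rw [ha3, hb3, mul_assoc, ← hc.eq]
    simp [pow_two, mul_assoc]
  exact trefoil_key lt @htr hirr htri hmul y1 y2 hy1ne hy2ne hR1 hR2 hcomm
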